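/- For any twice continuously differentiable f : ℝ → ℝ with bounded second derivative, and reals q, a, s, u with u·(q + a - s + u) = 0, one has |f(ε(q + a - s + u)) - f(εq) - ε f'(εq)(a - s) - (ε²/2) f''(εq)(a-s)² - ε u f'(ε(q+a-s+u))| ≤ (ε³/6)·‖f'''‖_∞·|a-s|³ + (ε²/2)·‖f''‖_∞·u², provided f is three times differentiable with bounded third derivative. -/

import Mathlib

open Set
open scoped Nat

lemma idw {m k : ℕ} {f : ℝ → ℝ} (hf : ContDiff ℝ (m : ℕ) f) {s : Set ℝ}
    (hs : UniqueDiffOn ℝ s) {y : ℝ} (hy : y ∈ s) (hk : k ≤ m) :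
    iteratedDerivWithin k f s y = iteratedDeriv k f y := by
  have h : HasFTaylorSeriesUpTo (m : ℕ∞) f (ftaylorSeries ℝ f) :=
    contDiff_iff_ftaylorSeries.mp (by exact_mod_cast hf)
  have h2 := (h.hasFTaylorSeriesUpToOn s).eq_iteratedFDerivWithin_of_uniqueDiffOn
    (m := k) (by exact_mod_cast hk) hs hy
  rw [iteratedDerivWithin, iteratedDeriv, ← h2]
  rfl

lemma taylor_core (n : ℕ) (f : ℝ → ℝ) (hf : ContDiff ℝ (n + 1 : ℕ) f) {C : ℝ}
    (hC : ∀ x, |iteratedDeriv (n + 1) f x| ≤ C) {A B : ℝ} (hAB : A < B) :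
    |f B - ∑ k ∈ Finset.range (n + 1), ((k ! : ℝ))⁻¹ * (B - A) ^ k * iteratedDeriv k f A|
      ≤ C * |B - A| ^ (n + 1) / (Nat.factorial (n+1) : ℝ) := by
  have hs : UniqueDiffOn ℝ (Icc A B) := uniqueDiffOn_Icc hAB
  have hfn : ContDiffOn ℝ n f (Icc A B) :=
    (hf.of_le (by exact_mod_cast Nat.le_succ n)).contDiffOn
  have hdiff : Differentiable ℝ (iteratedDeriv n f) :=
    hf.differentiable_iteratedDeriv n (by exact_mod_cast Nat.lt_succ_self n)
  have hf' : DifferentiableOn ℝ (iteratedDerivWithin n f (Icc A B)) (Ioo A B) := by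
    refine (hdiff.differentiableOn).congr fun y hy => ?_
    exact idw hf hs (Ioo_subset_Icc_self hy) (Nat.le_succ n)
  have hL := taylor_mean_remainder_lagrange hAB.ne (by rwa [Set.uIcc_of_le hAB.le])
    (by rwa [Set.uIcc_of_le hAB.le, Set.uIoo_of_le hAB.le])
  rw [Set.uIcc_of_le hAB.le, Set.uIoo_of_le hAB.le] at hL
  obtain ⟨x', hx', hxx⟩ := hL
  have hP : taylorWithinEval f n (Icc A B) A B =
      ∑ k ∈ Finset.range (n + 1), ((k ! : ℝ))⁻¹ * (B - A) ^ k * iteratedDeriv k f A := by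
    rw [taylor_within_apply]
    refine Finset.sum_congr rfl fun k hk => ?_
    rw [idw hf hs (left_mem_Icc.mpr hAB.le) (by have := Finset.mem_range.mp hk; omega)]
    rw [smul_eq_mul]
  rw [← hP, hxx]
  have h1 : iteratedDerivWithin (n + 1) f (Icc A B) x' = iteratedDeriv (n + 1) f x' :=
    idw hf hs (Ioo_subset_Icc_self hx') le_rfl
  rw [h1, abs_div, abs_mul]
  rw [abs_of_pos (by positivity : (0:ℝ) < (Nat.factorial (n+1) : ℝ))]
  apply div_le_div_of_nonneg_right ?_ (by positivity)
  rw [abs_pow]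
  exact mul_le_mul_of_nonneg_right (hC x') (by positivity)

lemma taylor_bound_gen (n : ℕ) (f : ℝ → ℝ) (hf : ContDiff ℝ (n + 1 : ℕ) f) {C : ℝ}
    (hC : ∀ x, |iteratedDeriv (n + 1) f x| ≤ C) (A B : ℝ) :
    |f B - ∑ k ∈ Finset.range (n + 1), ((k ! : ℝ))⁻¹ * (B - A) ^ k * iteratedDeriv k f A|
      ≤ C * |B - A| ^ (n + 1) / (Nat.factorial (n+1) : ℝ) := by
  rcases lt_trichotomy A B with h | h | h
  · exact taylor_core n f hf hC h
  · subst h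
    have : ∑ k ∈ Finset.range (n + 1), ((k ! : ℝ))⁻¹ * (A - A) ^ k * iteratedDeriv k f A
        = f A := by
      rw [Finset.sum_range_succ']
      simp
    rw [this]
    simp
  · -- reflect
    have hg : ContDiff ℝ (n + 1 : ℕ) (fun t => f (-t)) := hf.comp (contDiff_id.neg)
    have hCg : ∀ x, |iteratedDeriv (n + 1) (fun t => f (-t)) x| ≤ C := by
      intro x
      rw [iteratedDeriv_comp_neg]
      rw [smul_eq_mul, abs_mul, abs_pow, abs_neg, abs_one, one_pow, one_mul]
      exact hC (-x)
    have h' := taylor_core n (fun t => f (-t)) hg hCg (show -A < -B by linarith)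
    have e1 : ∀ k ∈ Finset.range (n+1),
        ((k ! : ℝ))⁻¹ * (-B - -A) ^ k * iteratedDeriv k (fun t => f (-t)) (-A)
        = ((k ! : ℝ))⁻¹ * (B - A) ^ k * iteratedDeriv k f A := by
      intro k _
      rw [iteratedDeriv_comp_neg, neg_neg, smul_eq_mul]
      have : (-B - -A) ^ k * (-1:ℝ) ^ k = (B - A) ^ k := by
        rw [← mul_pow]; congr 1; ring
      calc ((k ! : ℝ))⁻¹ * (-B - -A) ^ k * ((-1:ℝ) ^ k * iteratedDeriv k f A)
          = ((k ! : ℝ))⁻¹ * ((-B - -A) ^ k * (-1:ℝ) ^ k) * iteratedDeriv k f A := by ring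
        _ = _ := by rw [this]
    rw [Finset.sum_congr rfl e1] at h'
    have e2 : |(-B) - (-A)| = |B - A| := by rw [abs_sub_comm]; congr 1; ring
    have e2 : |(-B) - (-A)| = |B - A| := by rw [abs_sub_comm]; congr 1; ring
    rw [e2] at h'
    simpa using h'

lemma T2bound (f : ℝ → ℝ) (hf : ContDiff ℝ 2 f) {C : ℝ}
    (hC : ∀ x, |iteratedDeriv 2 f x| ≤ C) (A B : ℝ) :
    |f B - f A - deriv f A * (B - A)| ≤ C / 2 * |B - A| ^ 2 := by
  have h := taylor_bound_gen 1 f (by exact_mod_cast hf) hC A B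
  rw [Finset.sum_range_succ, Finset.sum_range_one] at h
  simp only [iteratedDeriv_zero, iteratedDeriv_one, pow_zero, pow_one,
    Nat.factorial_zero, Nat.factorial_one, Nat.cast_one, inv_one, one_mul] at h
  have e : f B - (f A + (B - A) * deriv f A) = f B - f A - deriv f A * (B - A) := by ring
  rw [e] at h
  calc |f B - f A - deriv f A * (B - A)| ≤ C * |B - A| ^ (1+1) / (Nat.factorial (1+1) : ℝ) := h
    _ = C / 2 * |B - A| ^ 2 := by norm_num [Nat.factorial]; ring

lemma T3bound (f : ℝ → ℝ) (hf : ContDiff ℝ 3 f) {C : ℝ}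
    (hC : ∀ x, |iteratedDeriv 3 f x| ≤ C) (A B : ℝ) :
    |f B - f A - deriv f A * (B - A) - iteratedDeriv 2 f A * (B - A) ^ 2 / 2|
      ≤ C / 6 * |B - A| ^ 3 := by
  have h := taylor_bound_gen 2 f (by exact_mod_cast hf) hC A B
  rw [Finset.sum_range_succ, Finset.sum_range_succ, Finset.sum_range_one] at h
  simp only [iteratedDeriv_zero, iteratedDeriv_one, pow_zero, pow_one,
    Nat.factorial_zero, Nat.factorial_one, Nat.factorial_two, Nat.cast_one, Nat.cast_ofNat,
    inv_one, one_mul] at h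
  have e : f B - (f A + (B - A) * deriv f A + (2:ℝ)⁻¹ * (B - A) ^ 2 * iteratedDeriv 2 f A)
      = f B - f A - deriv f A * (B - A) - iteratedDeriv 2 f A * (B - A) ^ 2 / 2 := by ring
  rw [e] at h
  calc |f B - f A - deriv f A * (B - A) - iteratedDeriv 2 f A * (B - A) ^ 2 / 2|
      ≤ C * |B - A| ^ (2+1) / (Nat.factorial (2+1) : ℝ) := h
    _ = C / 6 * |B - A| ^ 3 := by norm_num [Nat.factorial]; ring

theorem stmt_6 (f : ℝ → ℝ) (hf : ContDiff ℝ 3 f) (C2 C3 : ℝ)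
    (hC2 : ∀ x, |iteratedDeriv 2 f x| ≤ C2)
    (hC3 : ∀ x, |iteratedDeriv 3 f x| ≤ C3)
    (ε : ℝ) (hε : 0 < ε) (q a s u : ℝ) (hq : 0 ≤ q) (hu : 0 ≤ u)
    (horth : u * (q + a - s + u) = 0) :
    |f (ε * (q + a - s + u)) - f (ε * q) - ε * deriv f (ε * q) * (a - s)
        - ε ^ 2 / 2 * iteratedDeriv 2 f (ε * q) * (a - s) ^ 2
        - ε * u * deriv f (ε * (q + a - s + u))|
      ≤ ε ^ 3 / 6 * C3 * |a - s| ^ 3 + ε ^ 2 / 2 * C2 * u ^ 2 := by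
  set A := ε * q with hA
  set B := ε * (q + a - s + u) with hB
  have hBA : B - A = ε * (a - s + u) := by rw [hA, hB]; ring
  -- second derivative of f is the first derivative of deriv f, etc.
  have hdf : ContDiff ℝ 2 (deriv f) := by
    have : ContDiff ℝ (2 + 1 : WithTop ℕ∞) f := by exact_mod_cast hf
    exact (contDiff_succ_iff_deriv.mp this).2.2
  have hC2' : ∀ x, |iteratedDeriv 2 (deriv f) x| ≤ C3 := by
    intro x
    rw [show iteratedDeriv 2 (deriv f) = iteratedDeriv 3 f from (iteratedDeriv_succ' ..).symm]
    exact hC3 x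
  have h3 := T3bound f hf hC3 A B
  have h2 := T2bound (deriv f) hdf hC2' A B
  have e2 : deriv (deriv f) A = iteratedDeriv 2 f A := by
    rw [show (2:ℕ) = 1 + 1 from rfl, iteratedDeriv_succ, iteratedDeriv_one]
  rw [e2] at h2
  have hC2A := hC2 A
  have hC3nn : 0 ≤ C3 := le_trans (abs_nonneg _) (hC3 0)
  have hBAabs : |B - A| = ε * |a - s + u| := by
    rw [hBA, abs_mul, abs_of_pos hε]
  -- key algebraic identity
  have key : f B - f A - ε * deriv f A * (a - s)
      - ε ^ 2 / 2 * iteratedDeriv 2 f A * (a - s) ^ 2 - ε * u * deriv f B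
      = (f B - f A - deriv f A * (B - A) - iteratedDeriv 2 f A * (B - A) ^ 2 / 2)
        - ε * u * (deriv f B - deriv f A - iteratedDeriv 2 f A * (B - A))
        - ε ^ 2 / 2 * iteratedDeriv 2 f A * u ^ 2 := by
    rw [hBA]; ring
  rw [key]
  have tri : ∀ x y z : ℝ, |x - y - z| ≤ |x| + |y| + |z| := by
    intro x y z
    have h1 := abs_add_le (x - y) (-z)
    have h2 := abs_add_le x (-y)
    rw [abs_neg] at h1 h2
    calc |x - y - z| = |(x - y) + -z| := by ring_nf
      _ ≤ |x - y| + |z| := h1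
      _ ≤ |x| + |y| + |z| := by have : |x - y| = |x + -y| := by ring_nf
                                rw [this]; linarith
  calc |(f B - f A - deriv f A * (B - A) - iteratedDeriv 2 f A * (B - A) ^ 2 / 2)
        - ε * u * (deriv f B - deriv f A - iteratedDeriv 2 f A * (B - A))
        - ε ^ 2 / 2 * iteratedDeriv 2 f A * u ^ 2|
      ≤ |f B - f A - deriv f A * (B - A) - iteratedDeriv 2 f A * (B - A) ^ 2 / 2|
        + |ε * u * (deriv f B - deriv f A - iteratedDeriv 2 f A * (B - A))|
        + |ε ^ 2 / 2 * iteratedDeriv 2 f A * u ^ 2| := tri _ _ _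
    _ ≤ C3 / 6 * (ε * |a - s + u|) ^ 3
        + ε * u * (C3 / 2 * (ε * |a - s + u|) ^ 2)
        + ε ^ 2 / 2 * C2 * u ^ 2 := by
        gcongr ?_ + ?_ + ?_
        · rw [← hBAabs]; exact h3
        · rw [abs_mul, abs_mul, abs_of_pos hε, abs_of_nonneg hu, ← hBAabs]
          have := mul_le_mul_of_nonneg_left h2 (mul_nonneg hε.le hu)
          calc ε * u * |deriv f B - deriv f A - iteratedDeriv 2 f A * (B - A)|
              ≤ ε * u * (C3 / 2 * |B - A| ^ 2) := this
            _ = ε * u * (C3 / 2 * |B - A| ^ 2) := rfl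
        · rw [abs_mul, abs_mul, abs_of_nonneg (by positivity : (0:ℝ) ≤ ε ^ 2 / 2),
            abs_of_nonneg (by positivity : (0:ℝ) ≤ u ^ 2)]
          have := mul_le_mul_of_nonneg_left hC2A (by positivity : (0:ℝ) ≤ ε ^ 2 / 2)
          nlinarith [sq_nonneg u]
    _ ≤ ε ^ 3 / 6 * C3 * |a - s| ^ 3 + ε ^ 2 / 2 * C2 * u ^ 2 := by
        rcases mul_eq_zero.mp horth with h0 | h0
        · subst h0
          simp only [add_zero, mul_zero, zero_mul]
          have : C3 / 6 * (ε * |a - s|) ^ 3 = ε ^ 3 / 6 * C3 * |a - s| ^ 3 := by ring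
          linarith
        · -- q + a - s + u = 0
          have hw : a - s + u = -q := by linarith
          have hd : a - s = -(q + u) := by linarith
          rw [hw, hd, abs_neg, abs_neg, abs_of_nonneg hq, abs_of_nonneg (by linarith : (0:ℝ) ≤ q + u)]
          have hiden : ε ^ 3 / 6 * C3 * (q + u) ^ 3
              = C3 / 6 * (ε * q) ^ 3 + ε * u * (C3 / 2 * (ε * q) ^ 2)
                + C3 * ε ^ 3 / 6 * (3 * q * u ^ 2 + u ^ 3) := by ring
          have hpos : 0 ≤ C3 * ε ^ 3 / 6 * (3 * q * u ^ 2 + u ^ 3) := by positivity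
          linarith
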